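/- Let H be a graded-commutative ℚ-algebra whose reduced part H⁺ satisfies (H⁺)³ = 0. Then for the r-fold tensor product H^{⊗r}, the reduced part satisfies ((H^{⊗r})⁺)^{2r+1} = 0. Consequently, any product of 2r+1 elements of the kernel of the multiplication H^{⊗r} → H that lie in positive degree vanishes, i.e. zcl_r(H) ≤ 2r. -/

import Mathlib

open scoped TensorProduct

/-- The multiplication map `μ_r : H^{⊗r} → H`, `a₁ ⊗ ⋯ ⊗ a_r ↦ a₁ ⋯ a_r`. -/
noncomputable def mulAlgHom (H : Type*) [CommRing H] [Algebra ℚ H] (r : ℕ) :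
    (⨂[ℚ] _ : Fin r, H) →ₐ[ℚ] H :=
  PiTensorProduct.liftAlgHom (MultilinearMap.mkPiAlgebra ℚ (Fin r) H)
    (by simp) (by intro x y; simp [Finset.prod_mul_distrib])

section Aux

open PiTensorProduct

lemma aux_prod_mem_pow {A : Type*} [CommRing A] [Algebra ℚ A] (M : Submodule ℚ A) :
    ∀ (n : ℕ) (f : Fin n → A), (∀ i, f i ∈ M) → (∏ i, f i) ∈ M ^ n := by
  intro n
  induction n with
  | zero =>
    intro f _
    rw [pow_zero, Fin.prod_univ_zero]
    exact Submodule.one_le.mp (le_refl (1 : Submodule ℚ A))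
  | succ n ih =>
    intro f hf
    rw [Fin.prod_univ_succ, pow_succ']
    exact Submodule.mul_mem_mul (hf 0) (ih _ fun i => hf _)

lemma aux_pow_mono {A : Type*} [CommRing A] [Algebra ℚ A] {M N : Submodule ℚ A}
    (h : M ≤ N) (n : ℕ) : M ^ n ≤ N ^ n := by
  induction n with
  | zero => simp
  | succ n ih => rw [pow_succ, pow_succ]; exact mul_le_mul' ih h

lemma aux_sup_pow_le {A : Type*} [CommRing A] [Algebra ℚ A] {r : ℕ}
    (V : Fin r → Submodule ℚ A) (n : ℕ) :
    (⨆ i, V i) ^ n ≤ ⨆ (c : Fin r → ℕ) (_ : ∑ i, c i = n), ∏ i, V i ^ c i := by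
  classical
  induction n with
  | zero =>
    refine le_iSup₂_of_le (fun _ => 0) (by simp) ?_
    simp
  | succ n ih =>
    rw [pow_succ]
    refine le_trans (mul_le_mul' ih le_rfl) ?_
    rw [Submodule.iSup_mul]
    apply iSup_le; intro c
    rw [Submodule.iSup_mul]
    apply iSup_le; intro hc
    rw [Submodule.mul_iSup]
    apply iSup_le; intro i
    refine le_iSup₂_of_le (Function.update c i (c i + 1)) ?_ ?_
    · rw [Finset.sum_update_of_mem (Finset.mem_univ i), ← Finset.erase_eq]
      rw [← Finset.add_sum_erase _ c (Finset.mem_univ i)] at hc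
      omega
    · have h1 : (∏ j, V j ^ (Function.update c i (c i + 1) j))
          = V i ^ (c i + 1) * ∏ j ∈ Finset.univ.erase i, V j ^ c j := by
        rw [← Finset.mul_prod_erase Finset.univ _ (Finset.mem_univ i)]
        congr 1
        · simp
        · refine Finset.prod_congr rfl fun j hj => ?_
          rw [Function.update_of_ne (Finset.ne_of_mem_erase hj)]
      have h2 : (∏ j, V j ^ c j)
          = V i ^ c i * ∏ j ∈ Finset.univ.erase i, V j ^ c j :=
        (Finset.mul_prod_erase Finset.univ _ (Finset.mem_univ i)).symm
      rw [h1, h2, pow_succ, mul_right_comm]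

variable {H : Type*} [CommRing H] [Algebra ℚ H]
  (𝒜 : ℕ → Submodule ℚ H) [GradedAlgebra 𝒜] (r : ℕ)

lemma aux_proj_idem (x : H) :
    GradedAlgebra.proj 𝒜 0 (GradedAlgebra.proj 𝒜 0 x) = GradedAlgebra.proj 𝒜 0 x := by
  have h : GradedAlgebra.proj 𝒜 0 x ∈ 𝒜 0 := by
    rw [GradedAlgebra.proj_apply]; exact SetLike.coe_mem _
  rw [GradedAlgebra.proj_apply (𝒜 := 𝒜) 0 (GradedAlgebra.proj 𝒜 0 x),
    DirectSum.decompose_of_mem_same 𝒜 h]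

/-- The span of pure tensors whose `i`-th coordinate has vanishing degree-zero part. -/
noncomputable def auxV (i : Fin r) : Submodule ℚ (⨂[ℚ] _ : Fin r, H) :=
  Submodule.span ℚ
    {x | ∃ m : Fin r → H, GradedAlgebra.proj 𝒜 0 (m i) = 0 ∧ x = PiTensorProduct.tprod ℚ m}

lemma auxV_cube
    (hH : (LinearMap.ker (GradedAlgebra.proj 𝒜 0) : Submodule ℚ H) ^ 3 = ⊥)
    (i : Fin r) : auxV 𝒜 r i ^ 3 = ⊥ := by
  have key : ∀ x ∈ auxV 𝒜 r i, ∀ y ∈ auxV 𝒜 r i, ∀ z ∈ auxV 𝒜 r i, x * y * z = 0 := by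
    intro x hx
    induction hx using Submodule.span_induction with
    | mem x hxm =>
      intro y hy
      induction hy using Submodule.span_induction with
      | mem y hym =>
        intro z hz
        induction hz using Submodule.span_induction with
        | mem z hzm =>
          obtain ⟨a, ha, rfl⟩ := hxm
          obtain ⟨b, hb, rfl⟩ := hym
          obtain ⟨c, hc, rfl⟩ := hzm
          rw [PiTensorProduct.tprod_mul_tprod, PiTensorProduct.tprod_mul_tprod]
          refine MultilinearMap.map_coord_zero _ i ?_
          have h3 : a i * b i * c i ∈
              (LinearMap.ker (GradedAlgebra.proj 𝒜 0) : Submodule ℚ H) ^ 3 := by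
            have := Submodule.mul_mem_mul (Submodule.mul_mem_mul
              (LinearMap.mem_ker.mpr ha) (LinearMap.mem_ker.mpr hb))
              (LinearMap.mem_ker.mpr hc)
            rw [show ((LinearMap.ker (GradedAlgebra.proj 𝒜 0) : Submodule ℚ H) ^ 3)
              = LinearMap.ker (GradedAlgebra.proj 𝒜 0) * LinearMap.ker (GradedAlgebra.proj 𝒜 0)
                * LinearMap.ker (GradedAlgebra.proj 𝒜 0) by
                rw [pow_succ, pow_succ, pow_one]]
            exact this
          rw [hH] at h3
          simpa using h3
        | zero => simp
        | add z₁ z₂ _ _ ih₁ ih₂ => rw [mul_add, ih₁, ih₂, add_zero]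
        | smul a z _ ih => rw [mul_smul_comm, ih, smul_zero]
      | zero => intro z _; simp
      | add y₁ y₂ _ _ ih₁ ih₂ =>
        intro z hz
        rw [mul_add, add_mul, ih₁ z hz, ih₂ z hz, add_zero]
      | smul a y _ ih =>
        intro z hz
        rw [mul_smul_comm, smul_mul_assoc, ih z hz, smul_zero]
    | zero => intro y _ z _; simp
    | add x₁ x₂ _ _ ih₁ ih₂ =>
      intro y hy z hz
      rw [add_mul, add_mul, ih₁ y hy z hz, ih₂ y hy z hz, add_zero]
    | smul a x _ ih =>
      intro y hy z hz
      rw [smul_mul_assoc, smul_mul_assoc, ih y hy z hz, smul_zero]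
  refine le_bot_iff.mp ?_
  rw [show (auxV 𝒜 r i ^ 3) = auxV 𝒜 r i * auxV 𝒜 r i * auxV 𝒜 r i by
    rw [pow_succ, pow_succ, pow_one]]
  rw [Submodule.mul_le]
  intro m hm z hz
  refine Submodule.mul_induction_on hm (fun x hx y hy => ?_) (fun a b ha hb => ?_)
  · simpa using key x hx y hy z hz
  · simpa [add_mul] using Submodule.add_mem _ ha hb

lemma aux_ker_le :
    (LinearMap.ker (PiTensorProduct.map fun _ : Fin r => GradedAlgebra.proj 𝒜 0) :
        Submodule ℚ (⨂[ℚ] _ : Fin r, H)) ≤ ⨆ i, auxV 𝒜 r i := by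
  classical
  intro x hx
  set p : H →ₗ[ℚ] H := GradedAlgebra.proj 𝒜 0 with hp
  set T : Finset (Fin r) → (⨂[ℚ] _ : Fin r, H) →ₗ[ℚ] (⨂[ℚ] _ : Fin r, H) :=
    fun s => PiTensorProduct.map (fun i => if i ∈ s then LinearMap.id - p else p) with hT
  have hdecomp : ∀ y : ⨂[ℚ] _ : Fin r, H, ∑ s : Finset (Fin r), T s y = y := by
    intro y
    induction y using PiTensorProduct.induction_on with
    | smul_tprod q m =>
      simp only [map_smul]
      rw [← Finset.smul_sum]
      congr 1
      have hu : ((fun i => m i - p (m i)) + fun i => p (m i)) = m := by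
        funext i; simp
      calc ∑ s : Finset (Fin r), T s (PiTensorProduct.tprod ℚ m)
          = ∑ s : Finset (Fin r),
              PiTensorProduct.tprod ℚ (s.piecewise (fun i => m i - p (m i)) (fun i => p (m i))) := by
            refine Finset.sum_congr rfl fun s _ => ?_
            rw [hT]
            simp only [PiTensorProduct.map_tprod]
            congr 1
            funext i
            by_cases h : i ∈ s <;> simp [Finset.piecewise, h]
        _ = PiTensorProduct.tprod ℚ ((fun i => m i - p (m i)) + fun i => p (m i)) :=
            ((PiTensorProduct.tprod ℚ).map_add_univ _ _).symm
        _ = PiTensorProduct.tprod ℚ m := by rw [hu]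
    | add a b iha ihb =>
      simp only [map_add, Finset.sum_add_distrib, iha, ihb]
  have hx0 : T ∅ x = 0 := by
    have hTe : T ∅ = PiTensorProduct.map (fun _ : Fin r => p) := by
      rw [hT]; simp
    rw [hTe]
    exact LinearMap.mem_ker.mp hx
  have hxe : x = ∑ s ∈ Finset.univ.erase (∅ : Finset (Fin r)), T s x := by
    conv_lhs => rw [← hdecomp x]
    rw [← Finset.add_sum_erase _ _ (Finset.mem_univ (∅ : Finset (Fin r))), hx0, zero_add]
  rw [hxe]
  refine Submodule.sum_mem _ fun s hs => ?_
  have hsne : s ≠ ∅ := (Finset.mem_erase.mp hs).1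
  obtain ⟨i, hi⟩ := Finset.nonempty_iff_ne_empty.mpr hsne
  refine le_iSup (fun i => auxV 𝒜 r i) i ?_
  have : ∀ y : ⨂[ℚ] _ : Fin r, H, T s y ∈ auxV 𝒜 r i := by
    intro y
    induction y using PiTensorProduct.induction_on with
    | smul_tprod q m =>
      rw [map_smul]
      refine Submodule.smul_mem _ _ ?_
      rw [hT]
      simp only [PiTensorProduct.map_tprod]
      refine Submodule.subset_span ⟨_, ?_, rfl⟩
      simp only [hi, if_true]
      rw [LinearMap.sub_apply, LinearMap.id_apply, map_sub, hp, aux_proj_idem 𝒜 (m i), sub_self]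
    | add a b iha ihb =>
      rw [map_add]; exact Submodule.add_mem _ iha ihb
  exact this x

end Aux

/-- For a (graded-)commutative graded `ℚ`-algebra `H` whose reduced part `H⁺` (the elements
with vanishing degree-zero component) satisfies `(H⁺)³ = 0`, the reduced part of the `r`-fold
tensor power `H^{⊗r}` (the kernel of the projection `(proj₀)^{⊗r}` onto multidegree zero)
satisfies `((H^{⊗r})⁺)^{2r+1} = 0`; consequently any product of `2r+1` positive-degree
elements of the kernel of `μ_r : H^{⊗r} → H` vanishes, i.e. `zcl_r(H) ≤ 2r`. -/
theorem stmt_14 (H : Type*) [CommRing H] [Algebra ℚ H]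
    (𝒜 : ℕ → Submodule ℚ H) [GradedAlgebra 𝒜]
    (hH : (LinearMap.ker (GradedAlgebra.proj 𝒜 0) : Submodule ℚ H) ^ 3 = ⊥)
    (r : ℕ) (hr : 2 ≤ r) :
    (LinearMap.ker (PiTensorProduct.map fun _ : Fin r => GradedAlgebra.proj 𝒜 0) :
        Submodule ℚ (⨂[ℚ] _ : Fin r, H)) ^ (2 * r + 1) = ⊥ ∧
    (∀ f : Fin (2 * r + 1) → ⨂[ℚ] _ : Fin r, H,
      (∀ i, (PiTensorProduct.map fun _ : Fin r => GradedAlgebra.proj 𝒜 0) (f i) = 0 ∧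
        mulAlgHom H r (f i) = 0) →
      (∏ i, f i) = 0) := by
  classical
  have hbot : (LinearMap.ker (PiTensorProduct.map fun _ : Fin r => GradedAlgebra.proj 𝒜 0) :
      Submodule ℚ (⨂[ℚ] _ : Fin r, H)) ^ (2 * r + 1) = ⊥ := by
    refine le_bot_iff.mp ?_
    calc (LinearMap.ker (PiTensorProduct.map fun _ : Fin r => GradedAlgebra.proj 𝒜 0) :
        Submodule ℚ (⨂[ℚ] _ : Fin r, H)) ^ (2 * r + 1)
        ≤ (⨆ i, auxV 𝒜 r i) ^ (2 * r + 1) := aux_pow_mono (aux_ker_le 𝒜 r) _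
      _ ≤ ⨆ (c : Fin r → ℕ) (_ : ∑ i, c i = 2 * r + 1), ∏ i, auxV 𝒜 r i ^ c i :=
          aux_sup_pow_le _ _
      _ ≤ ⊥ := by
          refine iSup_le fun c => iSup_le fun hc => ?_
          have hex : ∃ i, 3 ≤ c i := by
            by_contra h
            push_neg at h
            have hle : ∑ i, c i ≤ ∑ _i : Fin r, 2 :=
              Finset.sum_le_sum fun i _ => by have := h i; omega
            rw [hc, Finset.sum_const, Finset.card_univ, Fintype.card_fin, smul_eq_mul] at hle
            omega
          obtain ⟨i, hi⟩ := hex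
          have hz : auxV 𝒜 r i ^ c i = ⊥ := by
            rw [show c i = 3 + (c i - 3) by omega, pow_add, auxV_cube 𝒜 r hH i,
              Submodule.bot_mul]
          have hz0 : (∏ j, auxV 𝒜 r j ^ c j) = 0 :=
            Finset.prod_eq_zero (Finset.mem_univ i)
              (by rw [hz, ← Submodule.zero_eq_bot])
          rw [hz0, Submodule.zero_eq_bot]
  refine ⟨hbot, fun f hf => ?_⟩
  have hmem : (∏ i, f i) ∈
      (LinearMap.ker (PiTensorProduct.map fun _ : Fin r => GradedAlgebra.proj 𝒜 0) :
        Submodule ℚ (⨂[ℚ] _ : Fin r, H)) ^ (2 * r + 1) :=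
    aux_prod_mem_pow _ _ f fun i => LinearMap.mem_ker.mpr (hf i).1
  rw [hbot] at hmem
  simpa using hmem
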